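/- Let G be a countably infinite group with an essentially free, mixing, measure-preserving action on a standard probability space (X,μ). Then for every ε > 0 there exist n ≥ 1 and a measurable partition X = Q₁ ⊔ … ⊔ Q_n such that for every g ∈ G with g ≠ e one has Σ_{k=1}^n μ(Q_k ∩ g • Q_k) ≤ ε. -/

import Mathlib

open MeasureTheory

noncomputable section

lemma aux_cdf_cont (ν : Measure ℝ) [IsProbabilityMeasure ν] [NullSingletonClass ν] :
    Continuous (ProbabilityTheory.cdf ν) := by
  rw [continuous_iff_continuousAt]
  intro x
  rw [(ProbabilityTheory.monotone_cdf ν).continuousAt_iff_leftLim_eq_rightLim]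
  have hR : Function.rightLim (ProbabilityTheory.cdf ν) x = ProbabilityTheory.cdf ν x :=
    (ProbabilityTheory.cdf ν).rightLim_eq x
  have hL : Function.leftLim (ProbabilityTheory.cdf ν) x = ProbabilityTheory.cdf ν x := by
    have hmeas : (ProbabilityTheory.cdf ν).measure {x} = 0 := by
      rw [ProbabilityTheory.measure_cdf]; exact measure_singleton x
    rw [StieltjesFunction.measure_singleton] at hmeas
    have h1 : ProbabilityTheory.cdf ν x - Function.leftLim (ProbabilityTheory.cdf ν) x ≤ 0 := by
      by_contra h
      push_neg at h
      rw [ENNReal.ofReal_eq_zero] at hmeas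
      linarith
    have h2 := (ProbabilityTheory.monotone_cdf ν).leftLim_le (le_refl x)
    linarith
  rw [hL, hR]

lemma aux_cdf_surj (ν : Measure ℝ) [IsProbabilityMeasure ν] [NullSingletonClass ν]
    {r : ℝ} (h0 : 0 < r) (h1 : r < 1) : ∃ s, ProbabilityTheory.cdf ν s = r := by
  have hc := aux_cdf_cont ν
  have hlo : ∃ s, ProbabilityTheory.cdf ν s ≤ r := by
    have := (ProbabilityTheory.tendsto_cdf_atBot ν).eventually_lt_const h0
    exact this.exists.imp fun s hs => hs.le
  have hhi : ∃ s, r ≤ ProbabilityTheory.cdf ν s := by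
    have := (ProbabilityTheory.tendsto_cdf_atTop ν).eventually_const_lt h1
    exact this.exists.imp fun s hs => hs.le
  exact mem_range_of_exists_le_of_exists_ge hc hlo hhi

/-- **Small-intersection partitions for free mixing actions.**
Let `G` be a countably infinite group with an essentially free mixing measure-preserving
action on a standard probability space `(X,μ)`.  For every `ε > 0` there is a finite
measurable partition `X = Q₁ ⊔ ⋯ ⊔ Q_n` such that
`∑ₖ μ(Q_k ∩ g•Q_k) ≤ ε` for every `g ≠ e`. -/
theorem free_mixing_partition
    {G : Type} [Group G] [Countable G] [Infinite G]
    {X : Type} [MeasurableSpace X] [StandardBorelSpace X]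
    (μ : Measure X) [IsProbabilityMeasure μ]
    (a : G → X → X)
    (hmeas : ∀ g, Measurable (a g)) (hmp : ∀ g, MeasurePreserving (a g) μ μ)
    (hone : ∀ x, a 1 x = x) (hmul : ∀ g h x, a (g * h) x = a g (a h x))
    (hfree : ∀ g : G, g ≠ 1 → μ {x | a g x = x} = 0)
    (hmix : ∀ A B : Set X, MeasurableSet A → MeasurableSet B →
      ∀ δ : ℝ, 0 < δ → ∃ F : Finset G, ∀ g : G, g ∉ F →
        |(μ (A ∩ a g '' B)).toReal - (μ A).toReal * (μ B).toReal| ≤ δ)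
    (ε : ℝ) (hε : 0 < ε) :
    ∃ (n : ℕ) (Q : Fin n → Set X), 1 ≤ n ∧
      (∀ k, MeasurableSet (Q k)) ∧
      (Pairwise fun k l => Disjoint (Q k) (Q l)) ∧
      (⋃ k, Q k) = Set.univ ∧
      ∀ g : G, g ≠ 1 → ∑ k, (μ (Q k ∩ a g '' Q k)).toReal ≤ ε := by
  classical
  obtain ⟨f, hf⟩ := exists_measurableEmbedding_real X
  -- basic group action facts
  have hinv1 : ∀ (g : G) (x : X), a g⁻¹ (a g x) = x := fun g x => by
    rw [← hmul, inv_mul_cancel, hone]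
  have hinv2 : ∀ (g : G) (x : X), a g (a g⁻¹ x) = x := fun g x => by
    rw [← hmul, mul_inv_cancel, hone]
  have himg : ∀ (g : G) (s : Set X), a g '' s = (a g⁻¹) ⁻¹' s := by
    intro g s; ext x; constructor
    · rintro ⟨y, hy, rfl⟩; simpa [hinv1] using hy
    · intro hx; exact ⟨a g⁻¹ x, hx, hinv2 g x⟩
  -- no atoms
  have hNA : ∀ x : X, μ {x} = 0 := by
    intro x
    by_contra h0
    have hms : MeasurableSet ({x} : Set X) := measurableSet_singleton x
    have hcpos : 0 < (μ {x}).toReal := ENNReal.toReal_pos h0 (measure_ne_top μ _)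
    set c := (μ {x}).toReal with hc
    obtain ⟨F, hF⟩ := hmix {x} {x} hms hms ((c * c) / 2) (by positivity)
    obtain ⟨g, hg⟩ := Infinite.exists_notMem_finset (F ∪ {1})
    rw [Finset.mem_union, Finset.mem_singleton] at hg
    push_neg at hg
    obtain ⟨hgF, hg1⟩ := hg
    have hb := hF g hgF
    rw [Set.image_singleton] at hb
    by_cases hfix : a g x = x
    · have hsub : ({x} : Set X) ⊆ {y | a g y = y} := by
        intro y hy; rw [Set.mem_singleton_iff] at hy; subst hy; exact hfix
      have : μ {x} ≤ μ {y | a g y = y} := measure_mono hsub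
      rw [hfree g hg1] at this
      exact h0 (le_antisymm this zero_le)
    · have hemp : ({x} : Set X) ∩ {a g x} = ∅ := by
        ext y
        simp only [Set.mem_inter_iff, Set.mem_singleton_iff, Set.mem_empty_iff_false, iff_false,
          not_and]
        rintro rfl h'
        exact hfix h'.symm
      rw [hemp] at hb
      simp only [measure_empty, ENNReal.toReal_zero, zero_sub, abs_neg, abs_of_nonneg
        (mul_nonneg hcpos.le hcpos.le)] at hb
      rw [← hc, abs_of_nonneg (mul_nonneg hcpos.le hcpos.le)] at hb
      nlinarith
  -- pushforward measure and its cdf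
  have hfm := hf.measurable
  set ν := Measure.map f μ with hν
  have hνp : IsProbabilityMeasure ν := Measure.isProbabilityMeasure_map hfm.aemeasurable
  have hνa : NullSingletonClass ν := by
    constructor
    intro t
    rw [hν, Measure.map_apply hfm (measurableSet_singleton t)]
    by_cases hx : ∃ x, f x = t
    · obtain ⟨x, rfl⟩ := hx
      have : f ⁻¹' {f x} = {x} := by
        ext y
        simp [hf.injective.eq_iff]
      rw [this]
      exact hNA x
    · have : f ⁻¹' {t} = ∅ := by
        ext y
        simp only [Set.mem_preimage, Set.mem_singleton_iff, Set.mem_empty_iff_false, iff_false]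
        exact fun h => hx ⟨y, h⟩
      simp [this]
  set V : ℝ → ℝ := fun s => (μ {x | f x ≤ s}).toReal with hV
  have hVcdf : ∀ s, ProbabilityTheory.cdf ν s = V s := by
    intro s
    rw [ProbabilityTheory.cdf_eq_real, measureReal_def, hν, Measure.map_apply hfm measurableSet_Iic]
    rfl
  have hVmono : Monotone V := by
    intro s s' hss
    exact ENNReal.toReal_mono (measure_ne_top μ _)
      (measure_mono fun x hx => le_trans hx hss)
  have hVsurj : ∀ r : ℝ, 0 < r → r < 1 → ∃ s, V s = r := by
    intro r h0 h1
    obtain ⟨s, hs⟩ := aux_cdf_surj ν h0 h1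
    exact ⟨s, by rw [← hVcdf]; exact hs⟩
  -- the "same pattern" sets
  set S : G → Finset ℝ → Set X := fun h C => {x | ∀ q ∈ C, (f x ≤ q ↔ f (a h x) ≤ q)} with hS
  have hSmeas : ∀ (h : G) (C : Finset ℝ), MeasurableSet (S h C) := by
    intro h C
    have hrw : S h C = ⋂ q ∈ (C : Set ℝ), {x | f x ≤ q ↔ f (a h x) ≤ q} := by
      ext x; simp [hS]
    rw [hrw]
    refine MeasurableSet.biInter C.countable_toSet fun q _ => ?_
    have m1 : MeasurableSet {x | f x ≤ q} := hfm measurableSet_Iic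
    have m2 : MeasurableSet {x | f (a h x) ≤ q} := (hfm.comp (hmeas h)) measurableSet_Iic
    have : {x | f x ≤ q ↔ f (a h x) ≤ q} =
        ({x | f x ≤ q} ∩ {x | f (a h x) ≤ q}) ∪ ({x | f x ≤ q}ᶜ ∩ {x | f (a h x) ≤ q}ᶜ) := by
      ext x
      by_cases h1 : f x ≤ q <;> by_cases h2 : f (a h x) ≤ q <;> simp [h1, h2]
    rw [this]
    exact (m1.inter m2).union (m1.compl.inter m2.compl)
  have hSmono : ∀ (h : G) (C C' : Finset ℝ), C ⊆ C' → S h C' ⊆ S h C := by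
    intro h C C' hCC x hx q hq
    exact hx q (hCC hq)
  -- freeness: small same-pattern sets for a fixed h
  have hSfree : ∀ h : G, h ≠ 1 → ∀ σ : ℝ, 0 < σ →
      ∃ C : Finset ℝ, (μ (S h C)).toReal ≤ σ := by
    intro h hh σ hσ
    set D : ℕ → Set X :=
      fun M => S h ((Finset.range M).image fun i => ((Denumerable.ofNat ℚ i : ℚ) : ℝ)) with hD
    have hDmeas : ∀ M, MeasurableSet (D M) := fun M => hSmeas _ _
    have hDanti : Antitone D := fun M M' hMM =>
      hSmono _ _ _ (Finset.image_subset_image (Finset.range_subset_range.2 hMM))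
    have hDint : ⋂ M, D M ⊆ {x | a h x = x} := by
      intro x hx
      simp only [Set.mem_iInter] at hx
      have hq : ∀ q : ℚ, (f x ≤ q ↔ f (a h x) ≤ q) := by
        intro q
        obtain ⟨i, hi⟩ : ∃ i, Denumerable.ofNat ℚ i = q :=
          ⟨_, Denumerable.ofNat_encode q⟩
        have hmem : ((q : ℝ)) ∈ (Finset.range (i + 1)).image
            fun j => ((Denumerable.ofNat ℚ j : ℚ) : ℝ) := by
          refine Finset.mem_image.2 ⟨i, ?_, ?_⟩
          · exact Finset.mem_range.2 (Nat.lt_succ_self _)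
          · rw [hi]
        exact hx (i + 1) _ hmem
      have hfe : f x = f (a h x) := by
        by_contra hne
        rcases lt_or_gt_of_ne hne with hlt | hlt
        · obtain ⟨q, hq1, hq2⟩ := exists_rat_btwn hlt
          exact absurd ((hq q).1 hq1.le) (not_le.2 hq2)
        · obtain ⟨q, hq1, hq2⟩ := exists_rat_btwn hlt
          exact absurd ((hq q).2 hq1.le) (not_le.2 hq2)
      have := hf.injective hfe
      exact this.symm
    have h0 : μ (⋂ M, D M) = 0 := by
      have h1 : μ (⋂ M, D M) ≤ μ {x | a h x = x} := measure_mono hDint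
      rw [hfree h hh] at h1
      exact le_antisymm h1 zero_le
    have htend := tendsto_measure_iInter_atTop (μ := μ)
      (fun M => (hDmeas M).nullMeasurableSet) hDanti ⟨0, measure_ne_top μ _⟩
    rw [h0] at htend
    have hev : ∀ᶠ M in Filter.atTop, (μ ∘ D) M < ENNReal.ofReal σ :=
      htend.eventually_lt_const (ENNReal.ofReal_pos.2 hσ)
    obtain ⟨M, hM⟩ := hev.exists
    exact ⟨_, ENNReal.toReal_le_of_le_ofReal hσ.le hM.le⟩
  -- coarse partition parameters
  set m : ℕ := ⌈4 / ε⌉₊ with hm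
  have hm0 : 0 < m := Nat.ceil_pos.2 (by positivity)
  have hm0R : (0:ℝ) < m := by exact_mod_cast hm0
  have hmge : 4 / ε ≤ (m:ℝ) := Nat.le_ceil _
  have hmeps : 1 / (m:ℝ) ≤ ε / 4 := by
    rw [div_le_iff₀ hε] at hmge
    rw [div_le_div_iff₀ hm0R (by norm_num : (0:ℝ) < 4)]
    nlinarith
  have htex : ∀ j, j < m - 1 → ∃ s, V s = ((j:ℝ) + 1) / m := by
    intro j hj
    apply hVsurj
    · positivity
    · rw [div_lt_one hm0R]
      have h1 : j + 1 < m := by omega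
      exact_mod_cast h1
  set t : ℕ → ℝ := fun j => if hj : j < m - 1 then (htex j hj).choose else 0 with ht
  have hVt : ∀ j, j < m - 1 → V (t j) = ((j:ℝ) + 1) / m := by
    intro j hj
    simp only [ht, dif_pos hj]
    exact (htex j hj).choose_spec
  have htmono : ∀ j j', j < j' → j' < m - 1 → t j < t j' := by
    intro j j' hjj hj'
    have hj : j < m - 1 := lt_trans hjj hj'
    by_contra hle
    push_neg at hle
    have hmon := hVmono hle
    rw [hVt j hj, hVt j' hj'] at hmon
    rw [div_le_div_iff₀ hm0R hm0R] at hmon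
    have hc : (j:ℝ) < (j':ℝ) := by exact_mod_cast hjj
    nlinarith
  -- the counting function and coarse pieces
  set Nc : X → ℕ := fun x => ((Finset.range (m-1)).filter fun j => t j < f x).card with hNc
  set P : ℕ → Set X := fun i => {x | Nc x = i} with hP
  have hNmeas : Measurable Nc := by
    have hrw : Nc = fun x => ∑ j ∈ Finset.range (m-1), if t j < f x then 1 else 0 := by
      funext x
      exact Finset.card_filter _ _
    rw [hrw]
    exact Finset.measurable_sum _ fun j _ =>
      Measurable.ite (hfm measurableSet_Ioi) measurable_const measurable_const
  have hPmeas : ∀ i, MeasurableSet (P i) := fun i => hNmeas (measurableSet_singleton i)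
  have hNlt : ∀ x, Nc x < m := by
    intro x
    have h1 : Nc x ≤ (Finset.range (m-1)).card := Finset.card_filter_le _ _
    rw [Finset.card_range] at h1
    omega
  have hPdisj : ∀ i i', i ≠ i' → Disjoint (P i) (P i') := by
    intro i i' hii
    rw [Set.disjoint_left]
    intro x hx hx'
    have h1 : Nc x = i := hx
    have h2 : Nc x = i' := hx'
    exact hii (h1 ▸ h2)
  -- size of coarse pieces
  have hPsize : ∀ i, i < m → (μ (P i)).toReal ≤ 1 / (m:ℝ) := by
    intro i him
    have hA : i < m - 1 → P i ⊆ {x | f x ≤ t i} := by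
      intro hi x hx
      by_contra hgt
      simp only [Set.mem_setOf_eq, not_le] at hgt
      have hsub : Finset.range (i+1) ⊆ (Finset.range (m-1)).filter fun j => t j < f x := by
        intro j hj
        rw [Finset.mem_range] at hj
        refine Finset.mem_filter.2 ⟨Finset.mem_range.2 (by omega), ?_⟩
        have hji : j ≤ i := by omega
        rcases eq_or_lt_of_le hji with heq | hlt
        · rw [heq]; exact hgt
        · exact lt_trans (htmono j i hlt hi) hgt
      have hcard := Finset.card_le_card hsub
      rw [Finset.card_range] at hcard
      have hxi : ((Finset.range (m-1)).filter fun j => t j < f x).card = i := hx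
      omega
    have hB : 1 ≤ i → P i ⊆ {x | t (i-1) < f x} := by
      intro hi x hx
      by_contra hle
      simp only [Set.mem_setOf_eq, not_lt] at hle
      have hsub : ((Finset.range (m-1)).filter fun j => t j < f x) ⊆ Finset.range (i-1) := by
        intro j hj
        rw [Finset.mem_filter, Finset.mem_range] at hj
        rw [Finset.mem_range]
        by_contra hge
        push_neg at hge
        have hti : t (i-1) ≤ t j := by
          rcases eq_or_lt_of_le hge with heq | hlt
          · rw [heq]
          · exact (htmono (i-1) j hlt hj.1).le
        linarith [hj.2]
      have hcard := Finset.card_le_card hsub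
      rw [Finset.card_range] at hcard
      have hxi : ((Finset.range (m-1)).filter fun j => t j < f x).card = i := hx
      omega
    rcases Nat.lt_or_ge i 1 with hi0 | hi1
    · -- i = 0
      have hieq : i = 0 := by omega
      subst hieq
      rcases Nat.lt_or_ge 1 m with hm2 | hm1
      · have h0m : 0 < m - 1 := by omega
        have hsub := hA h0m
        have hle : (μ (P 0)).toReal ≤ V (t 0) :=
          ENNReal.toReal_mono (measure_ne_top μ _) (measure_mono hsub)
        rw [hVt 0 h0m] at hle
        simpa using hle
      · have hm1' : m = 1 := by omega
        have hle : (μ (P 0)).toReal ≤ (μ (Set.univ : Set X)).toReal :=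
          ENNReal.toReal_mono (measure_ne_top μ _) (measure_mono (Set.subset_univ _))
        rw [measure_univ] at hle
        rw [hm1']
        simpa using hle
    · rcases Nat.lt_or_ge i (m-1) with him1 | him2
      · -- middle case
        have hsubA := hA him1
        have hsubB := hB hi1
        have hdisj : Disjoint (P i) {x | f x ≤ t (i-1)} := by
          rw [Set.disjoint_left]
          intro x hx hx'
          have h1 : t (i-1) < f x := hsubB hx
          have h2 : f x ≤ t (i-1) := hx'
          linarith
        have hmeasB : MeasurableSet {x | f x ≤ t (i-1)} := hfm measurableSet_Iic
        have hsubU : P i ∪ {x | f x ≤ t (i-1)} ⊆ {x | f x ≤ t i} := by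
          apply Set.union_subset hsubA
          intro x hx
          exact le_trans hx (htmono (i-1) i (by omega) him1).le
        have hle : μ (P i) + μ {x | f x ≤ t (i-1)} ≤ μ {x | f x ≤ t i} := by
          rw [← measure_union hdisj hmeasB]
          exact measure_mono hsubU
        have hle' : (μ (P i)).toReal + V (t (i-1)) ≤ V (t i) := by
          have h2 := ENNReal.toReal_mono (measure_ne_top μ _) hle
          rw [ENNReal.toReal_add (measure_ne_top μ _) (measure_ne_top μ _)] at h2
          exact h2
        rw [hVt (i-1) (by omega), hVt i him1] at hle'
        have hcast : ((i-1 : ℕ):ℝ) = (i:ℝ) - 1 := by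
          have h3 : (1:ℕ) ≤ i := hi1
          push_cast [h3]
          ring
        rw [hcast] at hle'
        have h1m : ((i:ℝ)+1)/m - ((i:ℝ)-1+1)/m = 1/m := by
          field_simp
          ring
        linarith
      · -- top case : i = m - 1, m ≥ 2
        have hieq : i = m - 1 := by omega
        have hm2 : 2 ≤ m := by omega
        have hsubB := hB hi1
        have hcompl : P i ⊆ {x | f x ≤ t (i-1)}ᶜ := by
          intro x hx hx'
          have h1 : t (i-1) < f x := hsubB hx
          have h2 : f x ≤ t (i-1) := hx'
          linarith
        have hmeasB : MeasurableSet {x | f x ≤ t (i-1)} := hfm measurableSet_Iic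
        have hle : (μ (P i)).toReal ≤ (μ ({x | f x ≤ t (i-1)}ᶜ)).toReal :=
          ENNReal.toReal_mono (measure_ne_top μ _) (measure_mono hcompl)
        rw [measure_compl hmeasB (measure_ne_top μ _)] at hle
        rw [ENNReal.toReal_sub_of_le (measure_mono (Set.subset_univ _))
          (measure_ne_top μ _)] at hle
        simp only [measure_univ, ENNReal.toReal_one] at hle
        have hVt1 : V (t (i-1)) = ((m:ℝ) - 1) / m := by
          have h4 : i - 1 < m - 1 := by omega
          rw [hVt (i-1) h4]
          have : ((i-1 : ℕ):ℝ) = (m:ℝ) - 2 := by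
            have : i - 1 = m - 2 := by omega
            rw [this]
            have h5 : (2:ℕ) ≤ m := hm2
            push_cast [h5]
            ring
          rw [this]
          ring
        have hle2 : (μ (P i)).toReal ≤ 1 - V (t (i-1)) := hle
        rw [hVt1] at hle2
        have : 1 - ((m:ℝ) - 1) / m = 1 / m := by
          field_simp
          ring
        linarith
  -- mixing finite sets
  set δ : ℝ := ε / (4 * m) with hδ
  have hδpos : 0 < δ := by positivity
  set Fi : ℕ → Finset G := fun i => (hmix (P i) (P i) (hPmeas i) (hPmeas i) δ hδpos).choose
    with hFi
  have hFis : ∀ i, ∀ g : G, g ∉ Fi i →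
      |(μ (P i ∩ a g '' P i)).toReal - (μ (P i)).toReal * (μ (P i)).toReal| ≤ δ := fun i =>
    (hmix (P i) (P i) (hPmeas i) (hPmeas i) δ hδpos).choose_spec
  set Fbig : Finset G := (Finset.range m).biUnion Fi with hFbig
  set C₀ : Finset ℝ := (Finset.range (m-1)).image t with hC₀
  have hsameN : ∀ (h : G) (x : X), x ∈ S h C₀ → Nc (a h x) = Nc x := by
    intro h x hx
    have hfeq : ((Finset.range (m-1)).filter fun j => t j < f (a h x)) =
        ((Finset.range (m-1)).filter fun j => t j < f x) := by
      apply Finset.filter_congr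
      intro j hj
      have hmem : t j ∈ C₀ := Finset.mem_image_of_mem t hj
      have hiff : f x ≤ t j ↔ f (a h x) ≤ t j := hx (t j) hmem
      rw [← not_le, ← not_le]
      exact not_congr hiff.symm
    exact congrArg Finset.card hfeq
  have hcoarse : ∀ h : G, h⁻¹ ∉ Fbig → (μ (S h C₀)).toReal ≤ ε / 2 := by
    intro h hhF
    have hsub : S h C₀ ⊆ ⋃ i ∈ Finset.range m, (P i ∩ (a h) ⁻¹' (P i)) := by
      intro x hx
      refine Set.mem_biUnion (Finset.mem_range.2 (hNlt x)) ?_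
      refine ⟨rfl, ?_⟩
      exact hsameN h x hx
    have hdisj2 : Set.PairwiseDisjoint (↑(Finset.range m)) (fun i => P i ∩ (a h) ⁻¹' (P i)) := by
      intro i _ i' _ hii
      exact (hPdisj i i' hii).mono Set.inter_subset_left Set.inter_subset_left
    have hmeas2 : ∀ i ∈ Finset.range m, MeasurableSet (P i ∩ (a h) ⁻¹' (P i)) := fun i _ =>
      (hPmeas i).inter ((hmeas h) (hPmeas i))
    have hμeq : μ (⋃ i ∈ Finset.range m, (P i ∩ (a h) ⁻¹' (P i))) =
        ∑ i ∈ Finset.range m, μ (P i ∩ (a h) ⁻¹' (P i)) :=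
      measure_biUnion_finset hdisj2 hmeas2
    have hle1 : (μ (S h C₀)).toReal ≤
        ∑ i ∈ Finset.range m, (μ (P i ∩ (a h) ⁻¹' (P i))).toReal := by
      have h1 : (μ (S h C₀)).toReal ≤
          (μ (⋃ i ∈ Finset.range m, (P i ∩ (a h) ⁻¹' (P i)))).toReal :=
        ENNReal.toReal_mono (measure_ne_top μ _) (measure_mono hsub)
      rw [hμeq, ENNReal.toReal_sum (fun i _ => measure_ne_top μ _)] at h1
      exact h1
    have hterm : ∀ i ∈ Finset.range m, (μ (P i ∩ (a h) ⁻¹' (P i))).toReal ≤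
        (μ (P i)).toReal * (μ (P i)).toReal + δ := by
      intro i hi
      have hnot : h⁻¹ ∉ Fi i := fun hc => hhF (Finset.mem_biUnion.2 ⟨i, hi, hc⟩)
      have hb := hFis i h⁻¹ hnot
      rw [himg h⁻¹, inv_inv] at hb
      have habs := abs_le.1 hb
      linarith [habs.2]
    have hsum2 : ∑ i ∈ Finset.range m, (μ (P i ∩ (a h) ⁻¹' (P i))).toReal ≤
        ∑ i ∈ Finset.range m, ((μ (P i)).toReal * (μ (P i)).toReal + δ) :=
      Finset.sum_le_sum hterm
    have hsumP : ∑ i ∈ Finset.range m, (μ (P i)).toReal ≤ 1 := by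
      have hdisjP : Set.PairwiseDisjoint (↑(Finset.range m)) P :=
        fun i _ i' _ hii => hPdisj i i' hii
      have hU : μ (⋃ i ∈ Finset.range m, P i) = ∑ i ∈ Finset.range m, μ (P i) :=
        measure_biUnion_finset hdisjP (fun i _ => hPmeas i)
      have h2 : ∑ i ∈ Finset.range m, (μ (P i)).toReal =
          (μ (⋃ i ∈ Finset.range m, P i)).toReal := by
        rw [hU, ENNReal.toReal_sum (fun i _ => measure_ne_top μ _)]
      rw [h2]
      have h3 : (μ (⋃ i ∈ Finset.range m, P i)).toReal ≤ (μ (Set.univ : Set X)).toReal :=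
        ENNReal.toReal_mono (measure_ne_top μ _) (measure_mono (Set.subset_univ _))
      simpa using h3
    have hsq : ∑ i ∈ Finset.range m, (μ (P i)).toReal * (μ (P i)).toReal ≤ ε/4 := by
      have h1 : ∀ i ∈ Finset.range m,
          (μ (P i)).toReal * (μ (P i)).toReal ≤ (ε/4) * (μ (P i)).toReal := by
        intro i hi
        have hle := le_trans (hPsize i (Finset.mem_range.1 hi)) hmeps
        nlinarith [ENNReal.toReal_nonneg (a := μ (P i))]
      calc ∑ i ∈ Finset.range m, (μ (P i)).toReal * (μ (P i)).toReal
          ≤ ∑ i ∈ Finset.range m, (ε/4) * (μ (P i)).toReal := Finset.sum_le_sum h1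
        _ = (ε/4) * ∑ i ∈ Finset.range m, (μ (P i)).toReal := by rw [Finset.mul_sum]
        _ ≤ (ε/4) * 1 := mul_le_mul_of_nonneg_left hsumP (by positivity)
        _ = ε/4 := by ring
    have hmδ : (m:ℝ) * δ = ε/4 := by
      rw [hδ]
      field_simp
    rw [Finset.sum_add_distrib, Finset.sum_const, Finset.card_range, nsmul_eq_mul] at hsum2
    linarith
  -- extra cuts for bad group elements
  set Cex : G → Finset ℝ := fun h => if hh : h = 1 then ∅ else (hSfree h hh ε hε).choose
    with hCex
  have hCexs : ∀ h : G, h ≠ 1 → (μ (S h (Cex h))).toReal ≤ ε := by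
    intro h hh
    simp only [hCex, dif_neg hh]
    exact (hSfree h hh ε hε).choose_spec
  set C : Finset ℝ := C₀ ∪ (Fbig.image fun g => g⁻¹).biUnion Cex with hC
  have hfinal : ∀ h : G, h ≠ 1 → (μ (S h C)).toReal ≤ ε := by
    intro h hh
    by_cases hb : h⁻¹ ∈ Fbig
    · have hCsub : Cex h ⊆ C := by
        rw [hC]
        refine le_trans ?_ Finset.subset_union_right
        have hmemi : h ∈ Fbig.image fun g => g⁻¹ := Finset.mem_image.2 ⟨h⁻¹, hb, inv_inv h⟩
        exact Finset.subset_biUnion_of_mem Cex hmemi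
      have hmono := hSmono h (Cex h) C hCsub
      exact le_trans (ENNReal.toReal_mono (measure_ne_top μ _) (measure_mono hmono))
        (hCexs h hh)
    · have hCsub : C₀ ⊆ C := by rw [hC]; exact Finset.subset_union_left
      have hmono := hSmono h C₀ C hCsub
      have h1 : (μ (S h C)).toReal ≤ (μ (S h C₀)).toReal :=
        ENNReal.toReal_mono (measure_ne_top μ _) (measure_mono hmono)
      exact le_trans h1 (le_trans (hcoarse h hb) (by linarith))
  -- final partition
  set K := {q : ℝ // q ∈ C} with hK
  set φ : X → (K → Bool) := fun x q => decide (f x ≤ (q : ℝ)) with hφ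
  set n : ℕ := Fintype.card (K → Bool) with hn
  have hn1 : 1 ≤ n := Fintype.card_pos_iff.2 ⟨fun _ => true⟩
  set e : (K → Bool) ≃ Fin n := Fintype.equivFin (K → Bool) with he
  set Q : Fin n → Set X := fun k => φ ⁻¹' {e.symm k} with hQ
  have hQmeas : ∀ k, MeasurableSet (Q k) := by
    intro k
    have hrw : Q k = ⋂ q : K, {x | f x ≤ (q : ℝ) ↔ e.symm k q = true} := by
      ext x
      simp only [hQ, Set.mem_preimage, Set.mem_singleton_iff, funext_iff, Set.mem_iInter,
        Set.mem_setOf_eq, hφ]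
      constructor
      · intro hx q
        rw [← hx q]
        simp
      · intro hx q
        have := hx q
        rcases Bool.eq_false_or_eq_true (e.symm k q) with hb | hb
        · rw [hb]
          simp only [hb, iff_true] at this
          simpa using this
        · rw [hb]
          simp only [hb] at this
          simp only [Bool.false_eq_true, iff_false] at this
          simpa using this
    rw [hrw]
    refine MeasurableSet.iInter fun q => ?_
    rcases Bool.eq_false_or_eq_true (e.symm k q) with hb | hb
    · have : {x | f x ≤ (q : ℝ) ↔ e.symm k q = true} = {x | f x ≤ (q : ℝ)} := by
        ext x
        simp [hb]
      rw [this]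
      exact hfm measurableSet_Iic
    · have : {x | f x ≤ (q : ℝ) ↔ e.symm k q = true} = {x | f x ≤ (q : ℝ)}ᶜ := by
        ext x
        simp [hb]
      rw [this]
      exact (hfm measurableSet_Iic).compl
  have hQdisj : Pairwise fun k l => Disjoint (Q k) (Q l) := by
    intro k l hkl
    rw [Set.disjoint_left]
    intro x hx hx'
    have h1 : φ x = e.symm k := hx
    have h2 : φ x = e.symm l := hx'
    exact hkl (e.symm.injective (h1 ▸ h2))
  have hQun : (⋃ k, Q k) = Set.univ := by
    ext x
    simp only [Set.mem_iUnion, Set.mem_univ, iff_true]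
    exact ⟨e (φ x), by simp [hQ]⟩
  refine ⟨n, Q, hn1, hQmeas, hQdisj, hQun, ?_⟩
  intro g hg
  have hg' : g⁻¹ ≠ 1 := inv_ne_one.2 hg
  have hQg : ∀ k, Q k ∩ a g '' Q k = Q k ∩ (a g⁻¹) ⁻¹' (Q k) := fun k => by rw [himg g]
  have hsub : ∀ k : Fin n, Q k ∩ (a g⁻¹) ⁻¹' (Q k) ⊆ S g⁻¹ C := by
    intro k x hx
    have h1 : φ x = e.symm k := hx.1
    have h2 : φ (a g⁻¹ x) = e.symm k := hx.2
    intro q hq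
    have h3 : φ x ⟨q, hq⟩ = φ (a g⁻¹ x) ⟨q, hq⟩ := by rw [h1, h2]
    simpa only [hφ, decide_eq_decide] using h3
  have hdisjU : Set.PairwiseDisjoint (↑(Finset.univ : Finset (Fin n)))
      (fun k => Q k ∩ (a g⁻¹) ⁻¹' (Q k)) := by
    intro k _ l _ hkl
    exact (hQdisj hkl).mono Set.inter_subset_left Set.inter_subset_left
  have hmeasI : ∀ k ∈ (Finset.univ : Finset (Fin n)),
      MeasurableSet (Q k ∩ (a g⁻¹) ⁻¹' (Q k)) := fun k _ =>
    (hQmeas k).inter ((hmeas g⁻¹) (hQmeas k))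
  have hμeq : μ (⋃ k ∈ (Finset.univ : Finset (Fin n)), (Q k ∩ (a g⁻¹) ⁻¹' (Q k))) =
      ∑ k, μ (Q k ∩ (a g⁻¹) ⁻¹' (Q k)) :=
    measure_biUnion_finset hdisjU hmeasI
  calc ∑ k, (μ (Q k ∩ a g '' Q k)).toReal
      = ∑ k, (μ (Q k ∩ (a g⁻¹) ⁻¹' (Q k))).toReal := by
        refine Finset.sum_congr rfl fun k _ => ?_
        rw [hQg k]
    _ = (μ (⋃ k ∈ (Finset.univ : Finset (Fin n)), (Q k ∩ (a g⁻¹) ⁻¹' (Q k)))).toReal := by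
        rw [hμeq, ENNReal.toReal_sum (fun k _ => measure_ne_top μ _)]
    _ ≤ (μ (S g⁻¹ C)).toReal := by
        refine ENNReal.toReal_mono (measure_ne_top μ _) (measure_mono ?_)
        exact Set.iUnion₂_subset fun k _ => hsub k
    _ ≤ ε := hfinal g⁻¹ hg'
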